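/- Let A be a rational matrix and a a rational column vector. Then the system Ax = a has a solution x with integer entries if and only if for every rational row vector y such that yA has integer entries, the scalar ya is an integer. -/

import Mathlib

set_option maxHeartbeats 1000000

open Finset

/-- A delta functional on a linearly independent family over `ℚ`. -/
lemma exists_dual_delta {m : ℕ} {ι : Type*} [DecidableEq ι] {v : ι → (Fin m → ℚ)}
    (hv : LinearIndependent ℚ v) (i0 : ι) (r : ℚ) :
    ∃ ℓ : (Fin m → ℚ) →ₗ[ℚ] ℚ, ∀ i, ℓ (v i) = if i = i0 then r else 0 := by
  classical
  have hs := (linearIndepOn_id_range_iff hv.injective).mpr hv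
  have hmem : ∀ i, v i ∈ hs.extend (Set.subset_univ _) := fun i =>
    hs.subset_extend _ ⟨i, rfl⟩
  refine ⟨r • (Module.Basis.extend hs).coord ⟨v i0, hmem i0⟩, fun i => ?_⟩
  have hB : ∀ i, Module.Basis.extend hs ⟨v i, hmem i⟩ = v i := fun i =>
    Module.Basis.extend_apply_self hs ⟨v i, hmem i⟩
  have : (Module.Basis.extend hs).coord ⟨v i0, hmem i0⟩ (v i)
      = if i = i0 then 1 else 0 := by
    rw [Module.Basis.coord_apply, ← hB i, (Module.Basis.extend hs).repr_self,
      Finsupp.single_apply]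
    congr 1
    simp only [Subtype.mk.injEq, eq_iff_iff]
    exact ⟨fun h => hv.injective h, fun h => h ▸ rfl⟩
  simp only [LinearMap.smul_apply, this, smul_eq_mul]
  split <;> ring

theorem stmt7 (m n : ℕ) (A : Matrix (Fin m) (Fin n) ℚ) (a : Fin m → ℚ) :
    (∃ x : Fin n → ℤ, A.mulVec (fun j => (x j : ℚ)) = a) ↔
      ∀ y : Fin m → ℚ,
        (∀ j : Fin n, ∃ z : ℤ, ∑ i, y i * A i j = (z : ℚ)) →
          ∃ z : ℤ, ∑ i, y i * a i = (z : ℚ) := by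
  classical
  constructor
  · rintro ⟨x, hx⟩ y hy
    choose z hz using hy
    refine ⟨∑ j, z j * x j, ?_⟩
    have : ∑ i, y i * a i = ∑ j, (∑ i, y i * A i j) * (x j : ℚ) := by
      rw [← hx]
      simp only [Matrix.mulVec, dotProduct, Finset.mul_sum]
      rw [Finset.sum_comm]
      refine Finset.sum_congr rfl fun j _ => ?_
      rw [Finset.sum_mul]
      exact Finset.sum_congr rfl fun i _ => by ring
    rw [this]
    push_cast
    exact Finset.sum_congr rfl fun j _ => by rw [hz j]
  · intro h
    by_contra hx
    -- the lattice generated by the columns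
    set L : Submodule ℤ (Fin m → ℚ) :=
      Submodule.span ℤ (Set.range fun j i => A i j) with hL
    have haL : a ∉ L := by
      intro haL
      obtain ⟨c, hc⟩ := (Submodule.mem_span_range_iff_exists_fun ℤ).mp haL
      refine hx ⟨c, ?_⟩
      funext i
      rw [← hc]
      simp only [Matrix.mulVec, dotProduct, Finset.sum_apply, Pi.smul_apply]
      exact Finset.sum_congr rfl fun j _ => by rw [zsmul_eq_mul]; ring
    -- build a separating functional
    set M : Submodule ℤ (Fin m → ℚ) := L ⊔ Submodule.span ℤ {a} with hM
    have hLM : L ≤ M := le_sup_left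
    have haM : a ∈ M :=
      Submodule.mem_sup_right (Submodule.mem_span_singleton_self a)
    haveI : Module.Finite ℤ M := Module.Finite.iff_fg.mpr
      (Submodule.FG.sup (Submodule.fg_span (Set.finite_range _))
        (Submodule.fg_span_singleton a))
    obtain ⟨k, snf⟩ := Submodule.smithNormalForm
      (Module.Free.chooseBasis ℤ M) (L.comap M.subtype)
    set N := L.comap M.subtype with hN
    set aM : M := ⟨a, haM⟩ with haM'
    have haN : aM ∉ N := haL
    set c := snf.bM.repr aM with hc
    -- the basis vectors, seen in ℚ^m, are ℚ-linearly independent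
    have hvZ : LinearIndependent ℤ fun i => (M.subtype (snf.bM i)) :=
      snf.bM.linearIndependent.map' M.subtype (Submodule.ker_subtype M)
    have hv : LinearIndependent ℚ fun i => ((snf.bM i : M) : Fin m → ℚ) :=
      (LinearIndependent.iff_fractionRing ℤ ℚ).mp hvZ
    -- evaluation of a delta functional on elements of M
    have keyEval : ∀ (i0) (r : ℚ) (ℓ : (Fin m → ℚ) →ₗ[ℚ] ℚ),
        (∀ i, ℓ ((snf.bM i : M) : Fin m → ℚ) = if i = i0 then r else 0) →
        ∀ w : M, ℓ (w : Fin m → ℚ) = (snf.bM.repr w i0 : ℚ) * r := by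
      intro i0 r ℓ hℓ w
      have hw : (w : Fin m → ℚ)
          = ∑ i, (snf.bM.repr w i : ℤ) • ((snf.bM i : M) : Fin m → ℚ) := by
        conv_lhs => rw [← snf.bM.sum_repr w]
        push_cast
        rfl
      rw [hw, map_sum]
      simp only [map_zsmul, hℓ, smul_ite, smul_zero]
      rw [Finset.sum_ite_eq' Finset.univ i0 fun i => (snf.bM.repr w i : ℤ) • r,
        if_pos (Finset.mem_univ i0), zsmul_eq_mul]
    -- find the index and scale giving non-integrality
    by_cases hout : ∃ i0, i0 ∉ Set.range snf.f ∧ c i0 ≠ 0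
    · obtain ⟨i0, hi0, hc0⟩ := hout
      obtain ⟨ℓ, hℓ⟩ := exists_dual_delta hv i0 ((2 * (c i0 : ℚ))⁻¹)
      set y : Fin m → ℚ := fun i => ℓ (Pi.single i 1) with hy
      have hℓy : ∀ w : Fin m → ℚ, ℓ w = ∑ i, w i * y i := by
        intro w
        rw [LinearMap.pi_apply_eq_sum_univ ℓ w]
        refine Finset.sum_congr rfl fun i _ => ?_
        rw [smul_eq_mul, hy]
        congr 1
        congr 1
        funext j
        simp [Pi.single_apply, eq_comm]
      have hcols : ∀ j : Fin n, ∃ z : ℤ, ∑ i, y i * A i j = (z : ℚ) := by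
        intro j
        refine ⟨0, ?_⟩
        have hmem : (fun i => A i j) ∈ L :=
          Submodule.subset_span ⟨j, rfl⟩
        have h0 : snf.bM.repr (⟨(fun i => A i j), hLM hmem⟩ : M) i0 = 0 :=
          snf.repr_eq_zero_of_notMem_range
            (⟨⟨(fun i => A i j), hLM hmem⟩, hmem⟩ : N) hi0
        calc (∑ i, y i * A i j)
            = ℓ (fun i => A i j) := by
              rw [hℓy]; exact Finset.sum_congr rfl fun i _ => mul_comm _ _
          _ = (snf.bM.repr (⟨(fun i => A i j), hLM hmem⟩ : M) i0 : ℚ)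
                * (2 * (c i0 : ℚ))⁻¹ :=
              keyEval i0 _ ℓ hℓ ⟨(fun i => A i j), hLM hmem⟩
          _ = ((0 : ℤ) : ℚ) := by rw [h0]; simp
      obtain ⟨z, hz⟩ := h y hcols
      have hla : ℓ a = (c i0 : ℚ) * (2 * (c i0 : ℚ))⁻¹ := keyEval i0 _ ℓ hℓ aM
      have hcne : (c i0 : ℚ) ≠ 0 := Int.cast_ne_zero.mpr hc0
      have : ℓ a = (2 : ℚ)⁻¹ := by rw [hla]; field_simp
      have hza : ℓ a = (z : ℚ) := by
        rw [← hz]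
        rw [hℓy]
        exact Finset.sum_congr rfl fun i _ => mul_comm _ _
      rw [this] at hza
      have : (1 : ℚ) = 2 * z := by field_simp at hza ⊢; linarith
      have : (1 : ℤ) = 2 * z := by exact_mod_cast this
      omega
    · push_neg at hout
      -- there must be a divisibility failure
      have hdvd : ∃ k0, ¬ (snf.a k0 ∣ c (snf.f k0)) := by
        by_contra hdvd
        push_neg at hdvd
        set xN : N := ∑ k0, (c (snf.f k0) / snf.a k0) • snf.bN k0 with hxN
        have hxM : ((xN : M) : Fin m → ℚ) = ((aM : M) : Fin m → ℚ) := by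
          have hrepr : snf.bM.repr (xN : M) = snf.bM.repr aM := by
            have hcoe : (xN : M)
                = ∑ k0, (c (snf.f k0) / snf.a k0 * snf.a k0) • snf.bM (snf.f k0) := by
              rw [hxN]
              push_cast
              refine Finset.sum_congr rfl fun k0 _ => ?_
              rw [snf.snf k0, smul_smul]
            ext i
            rw [hcoe, map_sum]
            simp only [map_smul, Module.Basis.repr_self, Finsupp.smul_single, smul_eq_mul,
              mul_one, Finsupp.coe_finset_sum, Finset.sum_apply, Finsupp.single_apply]
            by_cases hi : ∃ k0, snf.f k0 = i
            · obtain ⟨k0, rfl⟩ := hi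
              rw [Finset.sum_eq_single k0]
              · simp [← hc, Int.ediv_mul_cancel (hdvd k0)]
              · intro k1 _ hk1
                simp [snf.f.injective.ne hk1]
              · simp
            · push_neg at hi
              have : c i = 0 := hout i (by simpa using hi)
              simp only [← hc, this]
              rw [Finset.sum_eq_zero]
              intro k0 _
              simp [hi k0]
          have heq : (xN : M) = aM := snf.bM.repr.injective hrepr
          exact congrArg _ heq
        have heq : (xN : M) = aM := Subtype.ext hxM
        exact haN (heq ▸ xN.2)
      obtain ⟨k0, hk0⟩ := hdvd
      have hd0 : snf.a k0 ≠ 0 := by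
        intro h0
        have := snf.snf k0
        rw [h0, zero_smul] at this
        exact snf.bN.ne_zero k0 (Subtype.ext this)
      obtain ⟨ℓ, hℓ⟩ := exists_dual_delta hv (snf.f k0) ((snf.a k0 : ℚ))⁻¹
      set y : Fin m → ℚ := fun i => ℓ (Pi.single i 1) with hy
      have hℓy : ∀ w : Fin m → ℚ, ℓ w = ∑ i, w i * y i := by
        intro w
        rw [LinearMap.pi_apply_eq_sum_univ ℓ w]
        refine Finset.sum_congr rfl fun i _ => ?_
        rw [smul_eq_mul, hy]
        congr 1
        congr 1
        funext j
        simp [Pi.single_apply, eq_comm]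
      have hcols : ∀ j : Fin n, ∃ z : ℤ, ∑ i, y i * A i j = (z : ℚ) := by
        intro j
        have hmem : (fun i => A i j) ∈ L :=
          Submodule.subset_span ⟨j, rfl⟩
        set colN : N := ⟨⟨(fun i => A i j), hLM hmem⟩, hmem⟩ with hcolN
        refine ⟨snf.bN.repr colN k0, ?_⟩
        have hr : snf.bM.repr ((colN : M)) (snf.f k0)
            = snf.a k0 * snf.bN.repr colN k0 := by
          rw [snf.repr_apply_embedding_eq_repr_smul (m := colN), map_smul]
          simp [smul_eq_mul]
        have hdq : ((snf.a k0 : ℚ)) ≠ 0 := Int.cast_ne_zero.mpr hd0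
        calc (∑ i, y i * A i j)
            = ℓ (fun i => A i j) := by
              rw [hℓy]; exact Finset.sum_congr rfl fun i _ => mul_comm _ _
          _ = (snf.bM.repr ((colN : M)) (snf.f k0) : ℚ) * ((snf.a k0 : ℚ))⁻¹ :=
              keyEval (snf.f k0) _ ℓ hℓ (colN : M)
          _ = ((snf.bN.repr colN k0 : ℤ) : ℚ) := by
              rw [hr]; push_cast; field_simp
      obtain ⟨z, hz⟩ := h y hcols
      have hla : ℓ a = (c (snf.f k0) : ℚ) * ((snf.a k0 : ℚ))⁻¹ :=
        keyEval (snf.f k0) _ ℓ hℓ aM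
      have hza : ℓ a = (z : ℚ) := by
        rw [← hz, hℓy]
        exact Finset.sum_congr rfl fun i _ => mul_comm _ _
      rw [hla] at hza
      have hdq : ((snf.a k0 : ℚ)) ≠ 0 := Int.cast_ne_zero.mpr hd0
      have : (c (snf.f k0) : ℚ) = (z : ℚ) * (snf.a k0 : ℚ) := by
        field_simp at hza
        linarith
      have : c (snf.f k0) = z * snf.a k0 := by exact_mod_cast this
      exact hk0 ⟨z, by rw [this, mul_comm]⟩
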